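/- Let H be a finitely generated group with a normal subgroup N such that H/N is nilpotent and H is metanilpotent (nilpotent-by-nilpotent). Suppose H = R⟨h⟩ where R is the Hirsch–Plotkin radical of H, R is nilpotent, and N⟨h⟩ is locally nilpotent. Then H is nilpotent. -/

import Mathlib

/-- A group is locally nilpotent if every finitely generated subgroup is nilpotent. -/
def IsLocallyNilpotent (G : Type*) [Group G] : Prop :=
  ∀ S : Subgroup G, S.FG → Group.IsNilpotent S



open Subgroup
open scoped commutatorElement

universe u

section Helpers

variable {G : Type u} [Group G]

lemma nilpotent_of_le {S T : Subgroup G} (hST : S ≤ T) (hT : Group.IsNilpotent T) :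
    Group.IsNilpotent S := by
  haveI := hT
  exact (Group.isNilpotent_congr (Subgroup.subgroupOfEquivOfLe hST)).mp inferInstance

lemma nilpotent_map_subtype {T : Subgroup G} (S : Subgroup T) (hS : Group.IsNilpotent S) :
    Group.IsNilpotent (S.map T.subtype) := by
  haveI := hS
  exact (Group.isNilpotent_congr (Subgroup.equivMapOfInjective S T.subtype T.subtype_injective)).mp hS

lemma nilpotent_of_map_subtype {T : Subgroup G} (S : Subgroup T)
    (hS : Group.IsNilpotent (S.map T.subtype)) : Group.IsNilpotent S :=
  (Group.isNilpotent_congr (Subgroup.equivMapOfInjective S T.subtype T.subtype_injective)).mpr hS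

lemma fg_map_subtype {T : Subgroup G} (S : Subgroup T) (hS : S.FG) : (S.map T.subtype).FG := by
  haveI : Group.FG S := (Group.fg_iff_subgroup_fg S).mpr hS
  have hsurj : Function.Surjective
      ((Subgroup.equivMapOfInjective S T.subtype T.subtype_injective) : S →* S.map T.subtype) :=
    (Subgroup.equivMapOfInjective S T.subtype T.subtype_injective).surjective
  haveI := Group.fg_of_surjective hsurj
  exact (Group.fg_iff_subgroup_fg _).mp inferInstance

lemma fg_subgroupOf {S T : Subgroup G} (hST : S ≤ T) (hS : S.FG) : (S.subgroupOf T).FG := by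
  haveI : Group.FG S := (Group.fg_iff_subgroup_fg S).mpr hS
  have hsurj : Function.Surjective
      ((Subgroup.subgroupOfEquivOfLe hST).symm : S →* (S.subgroupOf T)) :=
    (Subgroup.subgroupOfEquivOfLe hST).symm.surjective
  haveI := Group.fg_of_surjective hsurj
  exact (Group.fg_iff_subgroup_fg _).mp inferInstance

lemma mem_join_normal_cyclic {A : Subgroup G} (hA : A.Normal) {h g : G}
    (hg : g ∈ A ⊔ Subgroup.closure {h}) : ∃ a ∈ A, ∃ t : ℤ, g = a * h ^ t := by
  haveI := hA
  have : g ∈ (↑(A ⊔ Subgroup.closure {h}) : Set G) := hg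
  rw [Subgroup.normal_mul] at this
  obtain ⟨a, ha, c, hc, rfl⟩ := this
  obtain ⟨t, rfl⟩ := Subgroup.mem_closure_singleton.mp hc
  exact ⟨a, ha, t, rfl⟩

lemma lcs_le_normalClosure {X : Set G} (hXfin : X.Finite) (hXtop : Subgroup.closure X = ⊤)
    (k : ℕ) : ∃ S : Set G, S.Finite ∧ S ⊆ Subgroup.lowerCentralSeries (⊤ : Subgroup G) k ∧
      Subgroup.lowerCentralSeries (⊤ : Subgroup G) k ≤ Subgroup.normalClosure S := by
  induction k with
  | zero =>
    exact ⟨X, hXfin, fun x _ => Subgroup.mem_top x,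
      by rw [Subgroup.lowerCentralSeries_zero, ← hXtop]; exact (Subgroup.closure_le _).mpr Subgroup.subset_normalClosure⟩
  | succ k ih =>
    obtain ⟨S, hSfin, hSsub, hSle⟩ := ih
    refine ⟨(fun p : G × G => ⁅p.1, p.2⁆) '' (S ×ˢ X), (hSfin.prod hXfin).image _, ?_, ?_⟩
    · rintro _ ⟨⟨s, x⟩, ⟨hs, _⟩, rfl⟩
      exact Subgroup.commutator_mem_commutator (hSsub hs) (Subgroup.mem_top x)
    · set C := Subgroup.normalClosure ((fun p : G × G => ⁅p.1, p.2⁆) '' (S ×ˢ X)) with hC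
      haveI : C.Normal := Subgroup.normalClosure_normal
      set π := QuotientGroup.mk' C with hπ
      show ⁅Subgroup.lowerCentralSeries (⊤ : Subgroup G) k, (⊤ : Subgroup G)⁆ ≤ C
      have hcent : ∀ a ∈ Subgroup.lowerCentralSeries (⊤ : Subgroup G) k, π a ∈ Subgroup.center (G ⧸ C) := by
        intro a ha
        have hKn : ((Subgroup.center (G ⧸ C)).comap π).Normal :=
          Subgroup.Normal.comap inferInstance π
        have hS : S ⊆ ((Subgroup.center (G ⧸ C)).comap π : Set G) := by
          intro s hs
          show π s ∈ Subgroup.center (G ⧸ C)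
          rw [Subgroup.mem_center_iff]
          intro q
          obtain ⟨g, rfl⟩ := QuotientGroup.mk'_surjective C q
          have hgX : g ∈ Subgroup.closure X := by rw [hXtop]; exact Subgroup.mem_top g
          have : g ∈ (Subgroup.centralizer {π s}).comap π := by
            refine (Subgroup.closure_le _).mpr ?_ hgX
            intro x hx
            show π x ∈ Subgroup.centralizer {π s}
            rw [Subgroup.mem_centralizer_iff]
            rintro _ rfl
            have hmem : ⁅s, x⁆ ∈ C :=
              Subgroup.subset_normalClosure ⟨(s, x), ⟨hs, hx⟩, rfl⟩
            have : π ⁅s, x⁆ = 1 := (QuotientGroup.eq_one_iff _).mpr hmem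
            rw [map_commutatorElement] at this
            exact commutatorElement_eq_one_iff_mul_comm.mp this
          have := Subgroup.mem_centralizer_iff.mp this (π s) rfl
          exact this.symm
        have : Subgroup.normalClosure S ≤ (Subgroup.center (G ⧸ C)).comap π :=
          Subgroup.normalClosure_le_normal hS
        exact this (hSle ha)
      rw [Subgroup.commutator_le]
      intro a ha b _
      have : π ⁅a, b⁆ = 1 := by
        rw [map_commutatorElement]
        exact commutatorElement_eq_one_iff_mul_comm.mpr
          ((Subgroup.mem_center_iff.mp (hcent a ha) (π b)).symm)
      exact (QuotientGroup.eq_one_iff _).mp this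

end Helpers

theorem aux_Y (n : ℕ) : ∀ {G : Type u} [Group G], Group.FG G → ∀ (U B : Subgroup G) (h : G),
    U.Normal → B.Normal → Subgroup.upperCentralSeries U n = ⊤ →
    U ⊔ Subgroup.closure {h} = ⊤ →
    Subgroup.lowerCentralSeries (⊤ : Subgroup G) 1 ≤ B →
    (∀ S : Subgroup G, S.FG → S ≤ B ⊔ Subgroup.closure {h} → Group.IsNilpotent S) →
    Group.IsNilpotent G := by
  induction n with
  | zero =>
    intro G _ hFG U B h hUn hBn hUc hgen hB2 hBh
    have hUbot : U = ⊥ := by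
      rw [eq_bot_iff]
      intro x hx
      have hmem : (⟨x, hx⟩ : U) ∈ Subgroup.upperCentralSeries U 0 := by rw [hUc]; trivial
      rw [Subgroup.upperCentralSeries_zero, Subgroup.mem_bot] at hmem
      have : x = 1 := congrArg Subtype.val hmem
      simp [this, Subgroup.mem_bot]
    have htop : Subgroup.closure {h} = (⊤ : Subgroup G) := by
      rw [hUbot, bot_sup_eq] at hgen; exact hgen
    refine Subgroup.nilpotent_iff_lowerCentralSeries.mpr ⟨1, ?_⟩
    rw [eq_bot_iff]
    show ⁅(⊤ : Subgroup G), ⊤⁆ ≤ ⊥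
    rw [Subgroup.commutator_le]
    intro a _ b _
    have ha : a ∈ Subgroup.closure ({h} : Set G) := by rw [htop]; trivial
    have hb : b ∈ Subgroup.closure ({h} : Set G) := by rw [htop]; trivial
    obtain ⟨ta, hta⟩ := Subgroup.mem_closure_singleton.mp ha
    obtain ⟨tb, htb⟩ := Subgroup.mem_closure_singleton.mp hb
    rw [Subgroup.mem_bot, ← hta, ← htb]
    exact commutatorElement_eq_one_iff_commute.mpr ((Commute.refl h).zpow_zpow ta tb)
  | succ n ih =>
    intro G _ hFG U B h hUn hBn hUc hgen hB2 hBh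
    classical
    haveI := hFG
    -- the subgroup Z(U) viewed inside G
    set Z : Subgroup G := Subgroup.centralizer (U : Set G) ⊓ U with hZdef
    haveI hZn : Z.Normal := by
      constructor
      intro z hz g
      obtain ⟨hz1, hz2⟩ := hz
      refine ⟨?_, hUn.conj_mem z hz2 g⟩
      show g * z * g⁻¹ ∈ Subgroup.centralizer (U : Set G)
      rw [Subgroup.mem_centralizer_iff]
      intro u hu
      have hu' : g⁻¹ * u * g ∈ U := by
        have := hUn.conj_mem u hu g⁻¹
        simpa using this
      have hcz : (g⁻¹ * u * g) * z = z * (g⁻¹ * u * g) :=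
        Subgroup.mem_centralizer_iff.mp hz1 _ hu'
      have h1 : u * (g * z * g⁻¹) = g * ((g⁻¹ * u * g) * z) * g⁻¹ := by group
      rw [h1, hcz]
      group
    set π := QuotientGroup.mk' Z with hπdef
    have hπsurj : Function.Surjective π := QuotientGroup.mk'_surjective Z
    haveI : Group.FG (G ⧸ Z) := Group.fg_of_surjective hπsurj
    -- center of U sits inside Z
    have hkerle : ∀ x : U, x ∈ Subgroup.center U → (x : G) ∈ Z := by
      intro x hx
      refine ⟨?_, x.2⟩
      show (x : G) ∈ Subgroup.centralizer (U : Set G)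
      rw [Subgroup.mem_centralizer_iff]
      intro u hu
      exact congrArg Subtype.val ((Subgroup.mem_center_iff.mp hx) ⟨u, hu⟩)
    set f₀ : U →* G ⧸ Z := π.comp U.subtype with hf₀
    have hrange : f₀.range = U.map π := by
      rw [hf₀, MonoidHom.range_comp, Subgroup.range_subtype]
    have hkerle' : Subgroup.center U ≤ f₀.ker := by
      intro x hx
      have hZx : (x : G) ∈ Z := hkerle x hx
      rw [MonoidHom.mem_ker]
      show π (x : G) = 1
      exact (QuotientGroup.eq_one_iff _).mpr hZx
    have hrr_ker : ∀ x : U, x ∈ Subgroup.center U → f₀.rangeRestrict x = 1 := by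
      intro x hx
      have hx1 : f₀ x = 1 := hkerle' hx
      exact Subtype.ext (by simpa using hx1)
    set ψ : (U ⧸ Subgroup.center U) →* f₀.range :=
      QuotientGroup.lift _ f₀.rangeRestrict hrr_ker with hψ
    have hψsurj : Function.Surjective ψ := by
      intro y
      obtain ⟨x, hxy⟩ := f₀.rangeRestrict_surjective y
      exact ⟨QuotientGroup.mk x, hxy⟩
    -- upper central series of the center quotient
    have hUcq : Subgroup.upperCentralSeries (U ⧸ Subgroup.center U) n = ⊤ := by
      have hcomap := Subgroup.comap_upperCentralSeries_quotient_center (G := U) n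
      apply Subgroup.comap_injective (QuotientGroup.mk'_surjective (Subgroup.center U))
      rw [hcomap, Subgroup.comap_top]
      exact hUc
    have hUc' : Subgroup.upperCentralSeries (U.map π : Subgroup (G ⧸ Z)) n = ⊤ := by
      rw [← hrange]
      have hmap := Subgroup.upperCentralSeries.map hψsurj n
      rw [hUcq, Subgroup.map_top_of_surjective ψ hψsurj] at hmap
      exact top_le_iff.mp hmap
    have hU'n : (U.map π).Normal := hUn.map π hπsurj
    have hB'n : (B.map π).Normal := hBn.map π hπsurj
    have hgen' : U.map π ⊔ Subgroup.closure {π h} = ⊤ := by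
      rw [← Set.image_singleton, ← MonoidHom.map_closure, ← Subgroup.map_sup, hgen,
        Subgroup.map_top_of_surjective π hπsurj]
    have hB2' : Subgroup.lowerCentralSeries (⊤ : Subgroup (G ⧸ Z)) 1 ≤ B.map π := by
      have heq : Subgroup.lowerCentralSeries (⊤ : Subgroup (G ⧸ Z)) 1 = Subgroup.map π (Subgroup.lowerCentralSeries (⊤ : Subgroup G) 1) := by
        show ⁅(⊤ : Subgroup (G ⧸ Z)), (⊤ : Subgroup (G ⧸ Z))⁆ = _
        rw [← Subgroup.map_top_of_surjective π hπsurj, ← Subgroup.map_commutator]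
        rfl
      rw [heq]
      exact Subgroup.map_mono hB2
    have hBh' : ∀ S' : Subgroup (G ⧸ Z), S'.FG → S' ≤ B.map π ⊔ Subgroup.closure {π h} →
        Group.IsNilpotent S' := by
      intro S' hS'fg hS'le
      obtain ⟨Xs', hXs'cl, hXs'fin⟩ := (Subgroup.fg_iff _).mp hS'fg
      have hchoice : ∀ x ∈ S', ∃ y, y ∈ B ⊔ Subgroup.closure {h} ∧ π y = x := by
        intro x hx
        have hx2 : x ∈ Subgroup.map π (B ⊔ Subgroup.closure {h}) := by
          rw [Subgroup.map_sup, MonoidHom.map_closure, Set.image_singleton]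
          exact hS'le hx
        obtain ⟨y, hy, hyx⟩ := hx2
        exact ⟨y, hy, hyx⟩
      have hXmem : ∀ x : Xs', (x : G ⧸ Z) ∈ S' := by
        intro x
        rw [← hXs'cl]
        exact Subgroup.subset_closure x.2
      haveI := hXs'fin.to_subtype
      set lift : Xs' → G := fun x => Classical.choose (hchoice x (hXmem x)) with hlift
      have hliftspec : ∀ x : Xs', lift x ∈ B ⊔ Subgroup.closure {h} ∧ π (lift x) = x :=
        fun x => Classical.choose_spec (hchoice x (hXmem x))
      set S₀ : Subgroup G := Subgroup.closure (Set.range lift) with hS₀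
      have hS₀le : S₀ ≤ B ⊔ Subgroup.closure {h} := by
        rw [hS₀, Subgroup.closure_le]
        rintro _ ⟨x, rfl⟩
        exact (hliftspec x).1
      have hS₀fg : S₀.FG := (Subgroup.fg_iff _).mpr ⟨Set.range lift, rfl, Set.finite_range lift⟩
      have hS₀nil := hBh S₀ hS₀fg hS₀le
      have hrange₀ : (π.comp S₀.subtype).range = S₀.map π := by
        rw [MonoidHom.range_comp, Subgroup.range_subtype]
      have hmapnil : Group.IsNilpotent (S₀.map π) := by
        rw [← hrange₀]
        haveI := hS₀nil
        exact Group.nilpotent_of_surjective (π.comp S₀.subtype).rangeRestrict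
          (π.comp S₀.subtype).rangeRestrict_surjective
      refine nilpotent_of_le ?_ hmapnil
      rw [← hXs'cl, Subgroup.closure_le]
      intro x hx
      exact ⟨lift ⟨x, hx⟩, Subgroup.subset_closure (Set.mem_range_self _), (hliftspec ⟨x, hx⟩).2⟩
    have hGq : Group.IsNilpotent (G ⧸ Z) :=
      ih inferInstance (U.map π) (B.map π) (π h) hU'n hB'n hUc' hgen' hB2' hBh'
    -- now descend back to G
    obtain ⟨m, hm⟩ := Subgroup.nilpotent_iff_lowerCentralSeries.mp hGq
    set e := m + 1 with he
    have hlcsZ : Subgroup.lowerCentralSeries (⊤ : Subgroup G) e ≤ Z := by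
      intro x hx
      have hx' : x ∈ Subgroup.lowerCentralSeries (⊤ : Subgroup G) m := Subgroup.lowerCentralSeries_antitone ⊤ (Nat.le_succ m) hx
      have : π x ∈ Subgroup.lowerCentralSeries (⊤ : Subgroup (G ⧸ Z)) m :=
        Subgroup.lowerCentralSeries.map π m ⟨x, hx', rfl⟩
      rw [hm, Subgroup.mem_bot] at this
      exact (QuotientGroup.eq_one_iff _).mp this
    have hlcsB : Subgroup.lowerCentralSeries (⊤ : Subgroup G) e ≤ B :=
      le_trans (Subgroup.lowerCentralSeries_antitone ⊤ (by omega : (1 : ℕ) ≤ e)) hB2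
    obtain ⟨X, hXcl, hXfin⟩ := Group.fg_iff.mp hFG
    obtain ⟨S, hSfin, hSsub, hSle⟩ := lcs_le_normalClosure hXfin hXcl e
    set φ : G → G := fun x => ⁅x, h⁆ with hφdef
    have hφmem : ∀ x ∈ Subgroup.lowerCentralSeries (⊤ : Subgroup G) e, φ x ∈ Subgroup.lowerCentralSeries (⊤ : Subgroup G) e := by
      intro x hx
      have : φ x ∈ Subgroup.lowerCentralSeries (⊤ : Subgroup G) (e + 1) :=
        Subgroup.commutator_mem_commutator hx (Subgroup.mem_top h)
      exact Subgroup.lowerCentralSeries_antitone ⊤ (Nat.le_succ e) this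
    have hφiter : ∀ j, ∀ x ∈ Subgroup.lowerCentralSeries (⊤ : Subgroup G) e, φ^[j] x ∈ Subgroup.lowerCentralSeries (⊤ : Subgroup G) e := by
      intro j
      induction j with
      | zero => intro x hx; simpa using hx
      | succ j hj =>
        intro x hx
        rw [Function.iterate_succ_apply']
        exact hφmem _ (hj x hx)
    set Y₀ := Subgroup.closure (S ∪ {h}) with hY₀
    have hY₀fg : Y₀.FG := (Subgroup.fg_iff _).mpr ⟨S ∪ {h}, rfl, hSfin.union (Set.finite_singleton h)⟩
    have hY₀le : Y₀ ≤ B ⊔ Subgroup.closure {h} := by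
      rw [hY₀, Subgroup.closure_le]
      rintro x (hx | hx)
      · exact Subgroup.mem_sup_left (hlcsB (hSsub hx))
      · rw [Set.mem_singleton_iff] at hx
        subst hx
        exact Subgroup.mem_sup_right (Subgroup.subset_closure rfl)
    have hY₀nil := hBh Y₀ hY₀fg hY₀le
    obtain ⟨nY, hnY⟩ := Subgroup.nilpotent_iff_lowerCentralSeries.mp hY₀nil
    have hkill : ∀ s ∈ S, φ^[nY] s = 1 := by
      intro s hs
      have hsY : s ∈ Y₀ := Subgroup.subset_closure (Or.inl hs)
      have hhY : h ∈ Y₀ := Subgroup.subset_closure (Or.inr rfl)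
      have key : ∀ j, ∃ y : Y₀, y ∈ Subgroup.lowerCentralSeries (⊤ : Subgroup Y₀) j ∧ (y : G) = φ^[j] s := by
        intro j
        induction j with
        | zero => exact ⟨⟨s, hsY⟩, Subgroup.mem_top _, rfl⟩
        | succ j hj =>
          obtain ⟨y, hy1, hy2⟩ := hj
          refine ⟨⁅y, (⟨h, hhY⟩ : Y₀)⁆,
            Subgroup.commutator_mem_commutator hy1 (Subgroup.mem_top _), ?_⟩
          rw [Function.iterate_succ_apply', ← hy2]
          exact map_commutatorElement Y₀.subtype y ⟨h, hhY⟩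
      obtain ⟨y, hy1, hy2⟩ := key nY
      rw [hnY, Subgroup.mem_bot] at hy1
      rw [← hy2, hy1]
      rfl
    have hφone : ∀ j, nY ≤ j → ∀ s ∈ S, φ^[j] s = 1 := by
      intro j hj s hs
      have h1 : ∀ k, φ^[k] (1 : G) = 1 := by
        intro k
        induction k with
        | zero => rfl
        | succ k hk =>
          rw [Function.iterate_succ_apply', hk]
          simp [hφdef]
      calc φ^[j] s = φ^[j - nY] (φ^[nY] s) := by
            rw [← Function.iterate_add_apply, Nat.sub_add_cancel hj]
        _ = 1 := by rw [hkill s hs]; exact h1 _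
    set Wset : ℕ → Set G :=
      fun k => { g | ∃ s ∈ S, ∃ j, k ≤ j ∧ ∃ t : ℤ, g = h ^ t * φ^[j] s * (h ^ t)⁻¹ } with hWset
    have hWsetZ : ∀ k, Wset k ⊆ (Z : Set G) := by
      rintro k g ⟨s, hs, j, hj, t, rfl⟩
      exact hZn.conj_mem _ (hlcsZ (hφiter j s (hSsub hs))) _
    have hWsetconj : ∀ (g : G) (k), ∀ w ∈ Wset k, g * w * g⁻¹ ∈ Wset k := by
      intro g k w hw
      have hgmem : g ∈ U ⊔ Subgroup.closure {h} := by rw [hgen]; trivial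
      obtain ⟨u, hu, t₀, rfl⟩ := mem_join_normal_cyclic hUn hgmem
      obtain ⟨s, hs, j, hj, t, rfl⟩ := hw
      have hw'mem : h ^ (t₀ + t) * φ^[j] s * (h ^ (t₀ + t))⁻¹ ∈ Wset k := ⟨s, hs, j, hj, t₀ + t, rfl⟩
      have hZw : h ^ (t₀ + t) * φ^[j] s * (h ^ (t₀ + t))⁻¹ ∈ Z := hWsetZ k hw'mem
      have hcomm : u * (h ^ (t₀ + t) * φ^[j] s * (h ^ (t₀ + t))⁻¹) * u⁻¹ =
          h ^ (t₀ + t) * φ^[j] s * (h ^ (t₀ + t))⁻¹ := by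
        have := Subgroup.mem_centralizer_iff.mp hZw.1 u hu
        rw [this]
        simp [mul_assoc]
      have hstep : (u * h ^ t₀) * (h ^ t * φ^[j] s * (h ^ t)⁻¹) * (u * h ^ t₀)⁻¹ =
          u * (h ^ (t₀ + t) * φ^[j] s * (h ^ (t₀ + t))⁻¹) * u⁻¹ := by
        rw [zpow_add]
        group
      rw [hstep, hcomm]
      exact hw'mem
    set W : ℕ → Subgroup G := fun k => Subgroup.closure (Wset k) with hW
    haveI hWnormal : ∀ k, (W k).Normal := by
      intro k
      constructor
      intro w hw g
      refine Subgroup.closure_induction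
        (fun x hx => Subgroup.subset_closure (hWsetconj g k x hx))
        (by simpa using (W k).one_mem)
        (fun x y hx hy hPx hPy => by
          have hxy : g * (x * y) * g⁻¹ = (g * x * g⁻¹) * (g * y * g⁻¹) := by group
          rw [hxy]; exact (W k).mul_mem hPx hPy)
        (fun x hx hPx => by
          have hxi : g * x⁻¹ * g⁻¹ = (g * x * g⁻¹)⁻¹ := by group
          rw [hxi]; exact (W k).inv_mem hPx)
        hw
    have hW0 : Subgroup.lowerCentralSeries (⊤ : Subgroup G) e ≤ W 0 := by
      refine le_trans hSle ?_
      haveI := hWnormal 0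
      refine Subgroup.normalClosure_le_normal ?_
      intro s hs
      exact Subgroup.subset_closure ⟨s, hs, 0, le_refl 0, 0, by simp⟩
    have hWstep : ∀ k, ⁅W k, (⊤ : Subgroup G)⁆ ≤ W (k + 1) := by
      intro k
      haveI := hWnormal (k + 1)
      set πk := QuotientGroup.mk' (W (k + 1)) with hπk
      have hcent : ∀ w ∈ W k, πk w ∈ Subgroup.center (G ⧸ W (k + 1)) := by
        have hsub : Wset k ⊆ (((Subgroup.center (G ⧸ W (k + 1))).comap πk : Subgroup G) : Set G) := by
          intro w hw
          have hwZ : w ∈ Z := hWsetZ k hw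
          show πk w ∈ Subgroup.center (G ⧸ W (k + 1))
          rw [Subgroup.mem_center_iff]
          intro q
          obtain ⟨g, rfl⟩ := QuotientGroup.mk'_surjective _ q
          have hgmem : g ∈ U ⊔ Subgroup.closure {h} := by rw [hgen]; trivial
          obtain ⟨u, hu, t₀, rfl⟩ := mem_join_normal_cyclic hUn hgmem
          have hc1 : Commute (πk w) (πk u) := by
            have huw : u * w = w * u := Subgroup.mem_centralizer_iff.mp hwZ.1 u hu
            have : Commute w u := ((show Commute u w from huw).symm)
            exact this.map πk
          have hc2 : Commute (πk w) (πk h) := by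
            have hmem : ⁅w, h⁆ ∈ Wset (k + 1) := by
              obtain ⟨s, hs, j, hj, t, rfl⟩ := hw
              refine ⟨s, hs, j + 1, by omega, t, ?_⟩
              rw [Function.iterate_succ_apply']
              show ⁅h ^ t * φ^[j] s * (h ^ t)⁻¹, h⁆ = h ^ t * ⁅φ^[j] s, h⁆ * (h ^ t)⁻¹
              group
            have : πk ⁅w, h⁆ = 1 := (QuotientGroup.eq_one_iff _).mpr (Subgroup.subset_closure hmem)
            rw [map_commutatorElement] at this
            exact commutatorElement_eq_one_iff_commute.mp this
          have hcall : Commute (πk w) (πk (u * h ^ t₀)) := by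
            rw [map_mul, map_zpow]
            exact hc1.mul_right (hc2.zpow_right t₀)
          exact hcall.symm.eq
        intro w hw
        exact (Subgroup.closure_le _).mpr hsub hw
      rw [Subgroup.commutator_le]
      intro w hw g _
      have : πk ⁅w, g⁆ = 1 := by
        rw [map_commutatorElement]
        exact commutatorElement_eq_one_iff_mul_comm.mpr
          ((Subgroup.mem_center_iff.mp (hcent w hw) (πk g)).symm)
      exact (QuotientGroup.eq_one_iff _).mp this
    have hlcsW : ∀ k, Subgroup.lowerCentralSeries (⊤ : Subgroup G) (e + k) ≤ W k := by
      intro k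
      induction k with
      | zero => simpa using hW0
      | succ k hk =>
        calc Subgroup.lowerCentralSeries (⊤ : Subgroup G) (e + (k + 1)) = ⁅Subgroup.lowerCentralSeries (⊤ : Subgroup G) (e + k), ⊤⁆ := rfl
          _ ≤ ⁅W k, ⊤⁆ := Subgroup.commutator_mono hk le_rfl
          _ ≤ W (k + 1) := hWstep k
    have hWbot : W nY ≤ ⊥ := by
      refine (Subgroup.closure_le _).mpr ?_
      rintro w ⟨s, hs, j, hj, t, rfl⟩
      rw [hφone j hj s hs]
      simp
    exact Subgroup.nilpotent_iff_lowerCentralSeries.mpr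
      ⟨e + nY, le_bot_iff.mp (le_trans (hlcsW nY) hWbot)⟩


theorem stmt_17 {H : Type*} [Group H] [Group.FG H]
    -- `H` is metanilpotent
    (hmeta : ∃ K : Subgroup H, ∃ _ : K.Normal, Group.IsNilpotent K ∧
      Group.IsNilpotent (H ⧸ K))
    (N : Subgroup H) (hN : N.Normal)
    (hHN : Group.IsNilpotent (H ⧸ N))
    (R : Subgroup H) (hRnormal : R.Normal)
    -- `R` is the Hirsch–Plotkin radical: the largest locally nilpotent normal subgroup
    (hRln : IsLocallyNilpotent R)
    (hRmax : ∀ K : Subgroup H, K.Normal → IsLocallyNilpotent K → K ≤ R)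
    (h : H)
    (hgen : R ⊔ Subgroup.closure {h} = ⊤)
    (hRnilp : Group.IsNilpotent R)
    (hNh : IsLocallyNilpotent (N ⊔ Subgroup.closure {h} : Subgroup H)) :
    Group.IsNilpotent H := by
  classical
  set C := Subgroup.closure ({h} : Set H) with hCdef
  -- Step 1: the commutator subgroup is contained in `R`, since `H/R` is cyclic.
  have hR2 : Subgroup.lowerCentralSeries (⊤ : Subgroup H) 1 ≤ R := by
    show ⁅(⊤ : Subgroup H), ⊤⁆ ≤ R
    rw [Subgroup.commutator_le]
    intro a _ b _
    set πR := QuotientGroup.mk' R with hπR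
    have htop' : Subgroup.closure {πR h} = (⊤ : Subgroup (H ⧸ R)) := by
      have hmap : Subgroup.map πR (R ⊔ C) = ⊤ := by
        rw [hgen]
        exact Subgroup.map_top_of_surjective πR (QuotientGroup.mk'_surjective R)
      rw [hCdef, Subgroup.map_sup, MonoidHom.map_closure, Set.image_singleton] at hmap
      have hRbot : Subgroup.map πR R = ⊥ := by
        rw [eq_bot_iff]
        rintro _ ⟨r, hr, rfl⟩
        rw [Subgroup.mem_bot]
        exact (QuotientGroup.eq_one_iff _).mpr hr
      rwa [hRbot, bot_sup_eq] at hmap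
    have hcyc : ∀ x : H ⧸ R, x ∈ Subgroup.closure {πR h} := by
      intro x; rw [htop']; trivial
    obtain ⟨ta, hta⟩ := Subgroup.mem_closure_singleton.mp (hcyc (πR a))
    obtain ⟨tb, htb⟩ := Subgroup.mem_closure_singleton.mp (hcyc (πR b))
    have h1 : πR ⁅a, b⁆ = 1 := by
      rw [map_commutatorElement, ← hta, ← htb]
      exact commutatorElement_eq_one_iff_commute.mpr ((Commute.refl (πR h)).zpow_zpow ta tb)
    exact (QuotientGroup.eq_one_iff _).mp h1
  -- Step 2: some term of the lower central series of `H` lies inside `N`.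
  obtain ⟨m₀, hm₀⟩ := Subgroup.nilpotent_iff_lowerCentralSeries.mp hHN
  set c := m₀ + 1 with hc
  have hcN : Subgroup.lowerCentralSeries (⊤ : Subgroup H) c ≤ N := by
    intro x hx
    have hx' : x ∈ Subgroup.lowerCentralSeries (⊤ : Subgroup H) m₀ := Subgroup.lowerCentralSeries_antitone ⊤ (Nat.le_succ m₀) hx
    have hmem : (QuotientGroup.mk' N) x ∈ Subgroup.lowerCentralSeries (⊤ : Subgroup (H ⧸ N)) m₀ :=
      Subgroup.lowerCentralSeries.map (QuotientGroup.mk' N) m₀ ⟨x, hx', rfl⟩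
    rw [hm₀, Subgroup.mem_bot] at hmem
    exact (QuotientGroup.eq_one_iff _).mp hmem
  -- Step 3: commutators of elements of `γ_i(H)⟨h⟩` lie in `γ_{i+1}(H)`.
  have hDcomm : ∀ i : ℕ, ∀ a ∈ Subgroup.lowerCentralSeries (⊤ : Subgroup H) i ⊔ C, ∀ b ∈ Subgroup.lowerCentralSeries (⊤ : Subgroup H) i ⊔ C,
      ⁅a, b⁆ ∈ Subgroup.lowerCentralSeries (⊤ : Subgroup H) (i + 1) := by
    intro i a ha b hb
    set πi := QuotientGroup.mk' (Subgroup.lowerCentralSeries (⊤ : Subgroup H) (i + 1)) with hπi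
    obtain ⟨x, hxm, s, rfl⟩ := mem_join_normal_cyclic (Subgroup.lowerCentralSeries_normal ⊤ i) ha
    obtain ⟨y, hym, t, rfl⟩ := mem_join_normal_cyclic (Subgroup.lowerCentralSeries_normal ⊤ i) hb
    have key : ∀ p ∈ Subgroup.lowerCentralSeries (⊤ : Subgroup H) i, ∀ q : H, Commute (πi p) (πi q) := by
      intro p hp q
      have hpq : ⁅p, q⁆ ∈ Subgroup.lowerCentralSeries (⊤ : Subgroup H) (i + 1) :=
        Subgroup.commutator_mem_commutator hp (Subgroup.mem_top q)
      have h1 : πi ⁅p, q⁆ = 1 := (QuotientGroup.eq_one_iff _).mpr hpq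
      rw [map_commutatorElement] at h1
      exact commutatorElement_eq_one_iff_commute.mp h1
    have hcomm : Commute (πi (x * h ^ s)) (πi (y * h ^ t)) := by
      rw [map_mul, map_mul, map_zpow, map_zpow]
      have c1 : Commute (πi x) (πi y) := key x hxm y
      have c2 : Commute (πi x) ((πi h) ^ t) := (key x hxm h).zpow_right t
      have c3 : Commute ((πi h) ^ s) (πi y) := ((key y hym h).zpow_right s).symm
      have c4 : Commute ((πi h) ^ s) ((πi h) ^ t) := (Commute.refl (πi h)).zpow_zpow s t
      exact Commute.mul_left (c1.mul_right c2) (c3.mul_right c4)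
    have h1 : πi ⁅x * h ^ s, y * h ^ t⁆ = 1 := by
      rw [map_commutatorElement]
      exact commutatorElement_eq_one_iff_commute.mpr hcomm
    exact (QuotientGroup.eq_one_iff _).mp h1
  -- Step 4: the inductive step.
  have hstep : ∀ i : ℕ, 1 ≤ i →
      (∀ S : Subgroup H, S.FG → S ≤ Subgroup.lowerCentralSeries (⊤ : Subgroup H) (i + 1) ⊔ C → Group.IsNilpotent S) →
      (∀ S : Subgroup H, S.FG → S ≤ Subgroup.lowerCentralSeries (⊤ : Subgroup H) i ⊔ C → Group.IsNilpotent S) := by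
    intro i hi ihP S hSfg hSle
    obtain ⟨Xs, hXscl, hXsfin⟩ := (Subgroup.fg_iff _).mp hSfg
    haveI := hXsfin.to_subtype
    have hchoice : ∀ x ∈ S, ∃ a ∈ Subgroup.lowerCentralSeries (⊤ : Subgroup H) i, ∃ t : ℤ, x = a * h ^ t := by
      intro x hx
      exact mem_join_normal_cyclic (Subgroup.lowerCentralSeries_normal ⊤ i) (hSle hx)
    have hXmem : ∀ x : Xs, (x : H) ∈ S := fun x => by
      rw [← hXscl]; exact Subgroup.subset_closure x.2
    set pa : Xs → H := fun x => Classical.choose (hchoice x (hXmem x)) with hpa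
    have hpaspec : ∀ x : Xs, pa x ∈ Subgroup.lowerCentralSeries (⊤ : Subgroup H) i ∧ ∃ t : ℤ, (x : H) = pa x * h ^ t := by
      intro x
      obtain ⟨h1, t, h2⟩ := Classical.choose_spec (hchoice x (hXmem x))
      exact ⟨h1, t, h2⟩
    set T : Subgroup H := Subgroup.closure (Set.range pa ∪ {h}) with hT
    have hhT : h ∈ T := Subgroup.subset_closure (Or.inr rfl)
    have hpaT : ∀ x : Xs, pa x ∈ T := fun x => Subgroup.subset_closure (Or.inl ⟨x, rfl⟩)
    have hST : S ≤ T := by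
      rw [← hXscl, Subgroup.closure_le]
      intro x hx
      obtain ⟨t, hxt⟩ := (hpaspec ⟨x, hx⟩).2
      show x ∈ T
      have : x = pa ⟨x, hx⟩ * h ^ t := hxt
      rw [this]
      exact T.mul_mem (hpaT _) (T.zpow_mem hhT t)
    have hTD : T ≤ Subgroup.lowerCentralSeries (⊤ : Subgroup H) i ⊔ C := by
      rw [hT, Subgroup.closure_le]
      rintro x (hx | hx)
      · obtain ⟨y, rfl⟩ := hx
        exact Subgroup.mem_sup_left (hpaspec y).1
      · rw [Set.mem_singleton_iff] at hx; subst hx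
        exact Subgroup.mem_sup_right (Subgroup.subset_closure rfl)
    haveI : Finite ↥(Set.range pa ∪ {h} : Set H) :=
      ((Set.finite_range pa).union (Set.finite_singleton h)).to_subtype
    haveI hTfg : Group.FG T := by rw [hT]; exact Group.closure_finite_fg _
    set hh : T := ⟨h, hhT⟩ with hhdef
    set Usub : Subgroup T := R.subgroupOf T with hUsub
    haveI hRn' := hRnormal
    have hUsubn : Usub.Normal := Subgroup.normal_subgroupOf
    have hUsubnil : Group.IsNilpotent Usub := by
      have hU1 : Usub = (R ⊓ T).subgroupOf T := by
        rw [hUsub]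
        ext x
        simp only [Subgroup.mem_subgroupOf, Subgroup.mem_inf]
        exact ⟨fun hx => ⟨hx, x.2⟩, fun hx => hx.1⟩
      rw [hU1]
      have hRTnil := nilpotent_of_le (inf_le_left : R ⊓ T ≤ R) hRnilp
      exact (Group.isNilpotent_congr
        (Subgroup.subgroupOfEquivOfLe (inf_le_right : R ⊓ T ≤ T))).mpr hRTnil
    obtain ⟨nU, hnU⟩ := Group.IsNilpotent.nilpotent Usub
    have hUgen : Usub ⊔ Subgroup.closure {hh} = ⊤ := by
      rw [eq_top_iff]
      intro x _
      have hTle : T ≤ Subgroup.map T.subtype (Usub ⊔ Subgroup.closure {hh}) := by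
        conv_lhs => rw [hT]
        rw [Subgroup.closure_le]
        rintro y (hy | hy)
        · obtain ⟨z, rfl⟩ := hy
          refine ⟨⟨pa z, hpaT z⟩, Subgroup.mem_sup_left ?_, rfl⟩
          show pa z ∈ R
          exact hR2 (Subgroup.lowerCentralSeries_antitone ⊤ hi (hpaspec z).1)
        · rw [Set.mem_singleton_iff] at hy; subst hy
          exact ⟨hh, Subgroup.mem_sup_right (Subgroup.subset_closure rfl), rfl⟩
      obtain ⟨y, hy, hyx⟩ := hTle x.2
      have hyx' : y = x := Subtype.ext hyx
      rwa [← hyx']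
    set Bsub : Subgroup T := (Subgroup.lowerCentralSeries (⊤ : Subgroup H) (i + 1)).subgroupOf T with hBsub
    have hBsubn : Bsub.Normal := Subgroup.normal_subgroupOf
    have hB2sub : Subgroup.lowerCentralSeries (⊤ : Subgroup T) 1 ≤ Bsub := by
      show ⁅(⊤ : Subgroup T), ⊤⁆ ≤ Bsub
      rw [Subgroup.commutator_le]
      intro a _ b _
      show ⁅a, b⁆ ∈ Bsub
      rw [hBsub, Subgroup.mem_subgroupOf]
      have hco : ((⁅a, b⁆ : T) : H) = ⁅(a : H), (b : H)⁆ := map_commutatorElement T.subtype a b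
      rw [hco]
      exact hDcomm i _ (hTD a.2) _ (hTD b.2)
    have hBhsub : ∀ S' : Subgroup T, S'.FG → S' ≤ Bsub ⊔ Subgroup.closure {hh} →
        Group.IsNilpotent S' := by
      intro S' hS'fg hS'le
      have hmaple : S'.map T.subtype ≤ Subgroup.lowerCentralSeries (⊤ : Subgroup H) (i + 1) ⊔ C := by
        have h1 : Subgroup.map T.subtype (Bsub ⊔ Subgroup.closure {hh}) ≤
            Subgroup.lowerCentralSeries (⊤ : Subgroup H) (i + 1) ⊔ C := by
          rw [Subgroup.map_sup]
          refine sup_le ?_ ?_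
          · rw [hBsub, Subgroup.subgroupOf_map_subtype]
            exact le_trans inf_le_left le_sup_left
          · rw [MonoidHom.map_closure, Set.image_singleton]
            have hcoe : T.subtype hh = h := rfl
            rw [hcoe, hCdef]
            exact le_sup_right
        exact le_trans (Subgroup.map_mono hS'le) h1
      have hnil := ihP (S'.map T.subtype) (fg_map_subtype S' hS'fg) hmaple
      exact nilpotent_of_map_subtype S' hnil
    have hTnil : Group.IsNilpotent T :=
      aux_Y nU hTfg Usub Bsub hh hUsubn hBsubn hnU hUgen hB2sub hBhsub
    exact nilpotent_of_le hST hTnil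
  -- Step 5: base of the descent.
  have hbase : ∀ i : ℕ, c ≤ i →
      (∀ S : Subgroup H, S.FG → S ≤ Subgroup.lowerCentralSeries (⊤ : Subgroup H) i ⊔ C → Group.IsNilpotent S) := by
    intro i hci S hSfg hSle
    have hle : S ≤ N ⊔ C :=
      le_trans hSle (sup_le_sup_right (le_trans (Subgroup.lowerCentralSeries_antitone ⊤ hci) hcN) C)
    have hfg' : (S.subgroupOf (N ⊔ C)).FG := fg_subgroupOf hle hSfg
    have hnil := hNh (S.subgroupOf (N ⊔ C)) hfg'
    exact (Group.isNilpotent_congr (Subgroup.subgroupOfEquivOfLe hle)).mp hnil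
  -- Step 6: descend from `c` to `1`.
  have hdesc : ∀ k i : ℕ, 1 ≤ i → c ≤ i + k →
      (∀ S : Subgroup H, S.FG → S ≤ Subgroup.lowerCentralSeries (⊤ : Subgroup H) i ⊔ C → Group.IsNilpotent S) := by
    intro k
    induction k with
    | zero => intro i hi hci; exact hbase i (by omega)
    | succ k ihk =>
      intro i hi hci
      exact hstep i hi (ihk (i + 1) (by omega) (by omega))
  have hP1 := hdesc c 1 le_rfl (by omega)
  -- Step 7: conclude.
  set D : Subgroup H := Subgroup.lowerCentralSeries (⊤ : Subgroup H) 1 ⊔ C with hD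
  have hDnormal : D.Normal := by
    constructor
    intro d hd g
    have h1 : g * d * g⁻¹ = ⁅g, d⁆ * d := by group
    rw [h1]
    refine D.mul_mem (Subgroup.mem_sup_left ?_) hd
    show ⁅g, d⁆ ∈ Subgroup.lowerCentralSeries (⊤ : Subgroup H) 1
    exact Subgroup.commutator_mem_commutator (Subgroup.mem_top g) (Subgroup.mem_top d)
  have hDln : IsLocallyNilpotent D := by
    intro S' hS'
    have h1 := hP1 (S'.map D.subtype) (fg_map_subtype S' hS') (Subgroup.map_subtype_le S')
    exact nilpotent_of_map_subtype S' h1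
  have hDR : D ≤ R := hRmax D hDnormal hDln
  have hhR : h ∈ R := hDR (Subgroup.mem_sup_right (Subgroup.subset_closure rfl))
  have hRtop : R = ⊤ := by
    rw [eq_top_iff, ← hgen]
    refine sup_le le_rfl ?_
    rw [hCdef, Subgroup.closure_le]
    intro x hx
    rw [Set.mem_singleton_iff] at hx
    subst hx
    exact hhR
  rw [hRtop] at hRnilp
  exact Group.isNilpotent_top.mp hRnilp
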